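/- Let M be a simple matroid on the ground set {1,...,n}. Then the NBC sets of the contraction M/n are exactly the subsets X of {1,...,n-1} such that X ∪ {n} is an NBC set of M. -/
import Mathlib


open Set

/-- A circuit of a matroid: a minimal dependent set. -/
def IsCircuit {α : Type*} (M : Matroid α) (C : Set α) : Prop :=
  M.Dep C ∧ ∀ D, D ⊂ C → ¬ M.Dep D

/-- A broken circuit: a circuit `C` with `|C| > 1` with its minimum element removed. -/
def BrokenCircuit {α : Type*} [LinearOrder α] (M : Matroid α) (B : Set α) : Prop :=
  ∃ C m, IsCircuit M C ∧ m ∈ C ∧ (∀ y ∈ C, m ≤ y) ∧ (C \ {m}).Nonempty ∧ B = C \ {m}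

/-- A no-broken-circuit (NBC) set: an independent set containing no broken circuit. -/
def NBC {α : Type*} [LinearOrder α] (M : Matroid α) (X : Set α) : Prop :=
  M.Indep X ∧ ∀ B, BrokenCircuit M B → ¬ B ⊆ X

private lemma exists_circuit_subset_aux {α : Type*} (M : Matroid α) :
    ∀ (k : ℕ) (D : Set α), D.Finite → D.ncard ≤ k → M.Dep D →
      ∃ C, C ⊆ D ∧ IsCircuit M C := by
  intro k
  induction k with
  | zero =>
    intro D hfin hcard hD
    have hD0 : D = ∅ := by
      rw [← Set.ncard_eq_zero hfin]; omega
    refine ⟨D, subset_rfl, hD, fun D' hss _ => ?_⟩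
    rw [hD0] at hss
    exact absurd (Set.subset_empty_iff.1 hss.subset) hss.ne
  | succ k ih =>
    intro D hfin hcard hD
    by_cases h : ∀ D' ⊂ D, ¬ M.Dep D'
    · exact ⟨D, subset_rfl, hD, h⟩
    · push_neg at h
      obtain ⟨D', hss, hD'⟩ := h
      have hlt := Set.ncard_lt_ncard hss hfin
      obtain ⟨C, hC, hcirc⟩ := ih D' (hfin.subset hss.subset) (by omega) hD'
      exact ⟨C, hC.trans hss.subset, hcirc⟩

lemma exists_circuit_subset {α : Type*} (M : Matroid α) {D : Set α}
    (hfin : D.Finite) (hD : M.Dep D) : ∃ C, C ⊆ D ∧ IsCircuit M C :=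
  exists_circuit_subset_aux M D.ncard D hfin le_rfl hD

/-- For a simple matroid `M` on a linearly ordered finite ground set with maximum
element `n`, the NBC sets of the contraction `M/n` (here `N`, characterized by its
ground set and independent sets) are exactly the subsets `X` of `M.E \ {n}` such
that `X ∪ {n}` is an NBC set of `M`. -/
theorem nbc_contract_top {α : Type*} [LinearOrder α] (M : Matroid α)
    (hE : M.E.Finite)
    (hsimple : (∀ x ∈ M.E, M.Indep {x}) ∧
      ∀ x ∈ M.E, ∀ y ∈ M.E, x ≠ y → M.Indep {x, y})
    (n : α) (hnE : n ∈ M.E) (hn : ∀ y ∈ M.E, y ≤ n)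
    (N : Matroid α) (hNE : N.E = M.E \ {n})
    (hNI : ∀ I, N.Indep I ↔ n ∉ I ∧ M.Indep (insert n I)) :
    ∀ X, NBC N X ↔ X ⊆ M.E \ {n} ∧ NBC M (insert n X) := by
  intro X
  constructor
  · rintro ⟨hXI, hXB⟩
    have hXsub : X ⊆ M.E \ {n} := hNE ▸ hXI.subset_ground
    obtain ⟨hnX, hMI⟩ := (hNI X).1 hXI
    refine ⟨hXsub, hMI, ?_⟩
    rintro B ⟨C, m, hCcirc, hmC, hmmin, hBne, rfl⟩ hBsub
    have hCE : C ⊆ M.E := hCcirc.1.subset_ground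
    -- m ≠ n
    have hmn : m ≠ n := by
      intro hemn
      have hC1 : C = {n} := by
        apply Set.Subset.antisymm
        · intro y hy
          have h1 := hmmin y hy
          rw [hemn] at h1
          have h2 := hn y (hCE hy)
          simp [le_antisymm h2 h1]
        · exact Set.singleton_subset_iff.2 (hemn ▸ hmC)
      exact hCcirc.1.not_indep (hC1 ▸ hsimple.1 n hnE)
    -- C \ {n} is dependent in N
    have hC'E : C \ {n} ⊆ N.E := by
      rw [hNE]; exact Set.diff_subset_diff_left hCE
    have hC'dep : N.Dep (C \ {n}) := by
      rw [Matroid.dep_iff]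
      refine ⟨fun hind => ?_, hC'E⟩
      obtain ⟨-, hind'⟩ := (hNI _).1 hind
      have : C ⊆ insert n (C \ {n}) := by
        intro x hx
        by_cases hxn : x = n
        · exact hxn ▸ Set.mem_insert _ _
        · exact Set.mem_insert_of_mem _ ⟨hx, hxn⟩
      exact hCcirc.1.not_indep (hind'.subset this)
    obtain ⟨C'', hC''sub, hC''circ⟩ := exists_circuit_subset N
      ((hE.subset hCE).subset Set.diff_subset) hC'dep
    -- C'' is not empty and not a singleton
    have hC''E : C'' ⊆ N.E := hC''circ.1.subset_ground
    have hnotsub : ∀ a, ¬ C'' ⊆ {a} := by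
      intro a hsub
      rcases Set.subset_singleton_iff_eq.1 hsub with h0 | h1
      · refine hC''circ.1.not_indep ?_
        rw [h0, hNI]
        exact ⟨Set.notMem_empty n, by simpa using hsimple.1 n hnE⟩
      · refine hC''circ.1.not_indep ?_
        rw [h1, hNI]
        have haE : a ∈ M.E \ {n} := hNE ▸ hC''E (by rw [h1]; exact Set.mem_singleton a)
        refine ⟨fun h => haE.2 (Set.mem_singleton_iff.2 (Set.mem_singleton_iff.1 h).symm), ?_⟩
        have := hsimple.2 n hnE a haE.1 (fun h => haE.2 h.symm)
        simpa using this
    have hC''ne : C''.Nonempty := by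
      rcases Set.eq_empty_or_nonempty C'' with h | h
      · exact absurd (h ▸ Set.empty_subset _) (hnotsub n)
      · exact h
    -- minimum of C''
    obtain ⟨m'', hm''C, hm''min⟩ := Set.exists_min_image C'' id
      ((hE.subset (fun x hx => (hNE ▸ hC''E hx : x ∈ M.E \ {n}).1))) hC''ne
    have hBne'' : (C'' \ {m''}).Nonempty := by
      rcases Set.eq_empty_or_nonempty (C'' \ {m''}) with h | h
      · exact absurd (by rw [Set.diff_eq_empty] at h; exact h) (hnotsub m'')
      · exact h
    -- the broken circuit C'' \ {m''} of N is contained in X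
    refine hXB (C'' \ {m''}) ⟨C'', m'', hC''circ, hm''C, hm''min, hBne'', rfl⟩ ?_
    intro x hx
    have hxC : x ∈ C := (hC''sub hx.1).1
    have hxn : x ≠ n := (hC''sub hx.1).2
    have hxm : x ≠ m := by
      intro h
      have hmem : m ∈ C'' := h ▸ hx.1
      have h1 : m'' ≤ m := hm''min m hmem
      have h2 : m ≤ m'' := hmmin m'' (hC''sub hm''C).1
      exact hx.2 (Set.mem_singleton_iff.2 (h.trans (le_antisymm h2 h1)))
    have : x ∈ insert n X := hBsub ⟨hxC, hxm⟩
    rcases this with h | h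
    · exact absurd h hxn
    · exact h
  · rintro ⟨hXsub, hMI, hMB⟩
    have hnX : n ∉ X := fun h => (hXsub h).2 rfl
    refine ⟨(hNI X).2 ⟨hnX, hMI⟩, ?_⟩
    rintro B ⟨C', m', hC'circ, hm'C, hm'min, hBne, rfl⟩ hBsub
    have hC'E : C' ⊆ N.E := hC'circ.1.subset_ground
    have hC'ME : C' ⊆ M.E \ {n} := hNE ▸ hC'E
    have hdep : M.Dep (insert n C') := by
      rw [Matroid.dep_iff]
      refine ⟨fun hind => ?_, ?_⟩
      · have hnC' : n ∉ C' := fun h => (hC'ME h).2 rfl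
        exact hC'circ.1.not_indep ((hNI C').2 ⟨hnC', hind⟩)
      · exact Set.insert_subset hnE (fun x hx => (hC'ME hx).1)
    obtain ⟨C, hCsub, hCcirc⟩ := exists_circuit_subset M
      (hE.subset (hdep.subset_ground)) hdep
    -- C \ {n} = C'
    have hdiffsub : C \ {n} ⊆ C' := by
      intro x hx
      rcases hCsub hx.1 with h | h
      · exact absurd h hx.2
      · exact h
    have hdiffdep : N.Dep (C \ {n}) := by
      rw [Matroid.dep_iff]
      refine ⟨fun hind => ?_, hdiffsub.trans hC'E⟩
      obtain ⟨-, hind'⟩ := (hNI _).1 hind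
      have : C ⊆ insert n (C \ {n}) := by
        intro x hx
        by_cases hxn : x = n
        · exact hxn ▸ Set.mem_insert _ _
        · exact Set.mem_insert_of_mem _ ⟨hx, hxn⟩
      exact hCcirc.1.not_indep (hind'.subset this)
    have heq : C \ {n} = C' := by
      by_contra hne
      exact hC'circ.2 (C \ {n}) (Set.ssubset_iff_subset_ne.2 ⟨hdiffsub, hne⟩) hdiffdep
    have hm'C2 : m' ∈ C := (heq ▸ hm'C : m' ∈ C \ {n}).1
    have hm'minC : ∀ y ∈ C, m' ≤ y := by
      intro y hy
      by_cases hyn : y = n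
      · exact hyn ▸ hn m' (hC'ME hm'C).1
      · exact hm'min y (heq ▸ (⟨hy, hyn⟩ : y ∈ C \ {n}))
    have hBneC : (C \ {m'}).Nonempty := by
      obtain ⟨x, hx⟩ := hBne
      exact ⟨x, (heq ▸ hx.1 : x ∈ C \ {n}).1, hx.2⟩
    refine hMB (C \ {m'}) ⟨C, m', hCcirc, hm'C2, hm'minC, hBneC, rfl⟩ ?_
    intro x hx
    by_cases hxn : x = n
    · exact hxn ▸ Set.mem_insert _ _
    · have : x ∈ C' \ {m'} := ⟨heq ▸ (⟨hx.1, hxn⟩ : x ∈ C \ {n}), hx.2⟩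
      exact Set.mem_insert_of_mem _ (hBsub this)
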